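/- Let n ≥ 2 be an integer and μ ∈ (0,1). If F ∈ M(μ) has an atom at some point b ∈ [0,1), i.e., F({b}) > 0, then F is not a symmetric equilibrium of the frictionless game: there exists G ∈ M(μ) with u_n(G,F) > 1/n. -/

import Mathlib

open MeasureTheory

/-- The fair-tie winning probability of one draw from `G` against `n-1` i.i.d. draws from
`F`, with exact ties broken uniformly at random. -/
noncomputable def winProb (n : ℕ) (G F : Measure ℝ) : ℝ :=
  ∫ x, (∑ i ∈ Finset.range n,
      ((n - 1).choose i : ℝ) * ((F {x}).toReal) ^ i * ((F (Set.Ico 0 x)).toReal) ^ (n - 1 - i)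
        / ((i : ℝ) + 1)) ∂G

/-- `F ∈ M(μ)`: a Borel probability measure on `[0,1]` with mean `μ`. -/
def MemM (μ : ℝ) (F : Measure ℝ) : Prop :=
  IsProbabilityMeasure F ∧ F (Set.Icc (0:ℝ) 1)ᶜ = 0 ∧ (∫ x, x ∂F) = μ

/-- Winner set: player j has strictly bigger value than all earlier players,
    and ≥ all later players. -/
def Dset (m : ℕ) (j : Fin (m+1)) : Set (Fin (m+1) → ℝ) :=
  {w | ∀ i, (i < j → w i < w j) ∧ (j < i → w i ≤ w j)}

lemma Dset_measurable (m : ℕ) (j : Fin (m+1)) : MeasurableSet (Dset m j) := by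
  have : Dset m j = ⋂ i, ({w : Fin (m+1) → ℝ | i < j → w i < w j} ∩
      {w | j < i → w i ≤ w j}) := by
    ext w; simp [Dset, Set.mem_iInter, forall_and]
  rw [this]
  refine MeasurableSet.iInter fun i => MeasurableSet.inter ?_ ?_
  · rcases lt_or_ge i j with h | h
    · simp only [h, true_implies]
      exact measurableSet_lt (measurable_pi_apply i) (measurable_pi_apply j)
    · have : {w : Fin (m+1) → ℝ | i < j → w i < w j} = Set.univ := by
        ext w; simp [not_lt.2 h]
      simp [this]
  · rcases lt_or_ge j i with h | h
    · simp only [h, true_implies]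
      exact measurableSet_le (measurable_pi_apply i) (measurable_pi_apply j)
    · have : {w : Fin (m+1) → ℝ | j < i → w i ≤ w j} = Set.univ := by
        ext w; simp [not_lt.2 h]
      simp [this]

lemma Dset_cover (m : ℕ) : (⋃ j, Dset m j) = Set.univ := by
  ext w
  simp only [Set.mem_iUnion, Set.mem_univ, iff_true]
  obtain ⟨j0, hj0⟩ := Finite.exists_max w
  classical
  set s : Finset (Fin (m+1)) := Finset.univ.filter (fun i => ∀ i', w i' ≤ w i) with hs
  have hsne : s.Nonempty := ⟨j0, by simp [hs, hj0]⟩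
  refine ⟨s.min' hsne, fun i => ⟨fun hi => ?_, fun hi => ?_⟩⟩
  · have hmem := s.min'_mem hsne
    have hmax : ∀ i', w i' ≤ w (s.min' hsne) := by
      simpa [hs] using hmem
    rcases lt_or_eq_of_le (hmax i) with h | h
    · exact h
    · exfalso
      have : i ∈ s := by
        simp only [hs, Finset.mem_filter, Finset.mem_univ, true_and]
        intro i'; rw [h]; exact hmax i'
      exact absurd (s.min'_le i this) (not_le.2 hi)
  · have hmem := s.min'_mem hsne
    have hmax : ∀ i', w i' ≤ w (s.min' hsne) := by
      simpa [hs] using hmem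
    exact hmax i

lemma Dset_disjoint (m : ℕ) : Pairwise (Function.onFun Disjoint (Dset m)) := by
  intro j j' hne
  rw [Function.onFun, Set.disjoint_left]
  intro w hw hw'
  rcases hne.lt_or_gt with h | h
  · exact absurd ((hw' j).1 h) (not_lt.2 ((hw j').2 h))
  · exact absurd ((hw j').1 h) (not_lt.2 ((hw' j).2 h))

lemma measurable_meas_Iio (F : Measure ℝ) [IsFiniteMeasure F] :
    Measurable fun x => (F (Set.Iio x)).toReal := by
  apply Monotone.measurable
  intro x y hxy
  exact ENNReal.toReal_mono (measure_ne_top F _) (measure_mono (Set.Iio_subset_Iio hxy))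

lemma measurable_meas_Iic (F : Measure ℝ) [IsFiniteMeasure F] :
    Measurable fun x => (F (Set.Iic x)).toReal := by
  apply Monotone.measurable
  intro x y hxy
  exact ENNReal.toReal_mono (measure_ne_top F _) (measure_mono (Set.Iic_subset_Iic.2 hxy))

lemma ofReal_toReal_meas (F : Measure ℝ) [IsFiniteMeasure F] (s : Set ℝ) :
    ENNReal.ofReal ((F s).toReal) = F s :=
  ENNReal.ofReal_toReal (measure_ne_top F s)

lemma aemeas_Iio (F : Measure ℝ) [IsFiniteMeasure F] :
    Measurable fun x => F (Set.Iio x) := by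
  have : (fun x => F (Set.Iio x)) = fun x => ENNReal.ofReal ((F (Set.Iio x)).toReal) := by
    ext x; rw [ofReal_toReal_meas]
  rw [this]
  exact ENNReal.measurable_ofReal.comp (measurable_meas_Iio F)

lemma aemeas_Iic (F : Measure ℝ) [IsFiniteMeasure F] :
    Measurable fun x => F (Set.Iic x) := by
  have : (fun x => F (Set.Iic x)) = fun x => ENNReal.ofReal ((F (Set.Iic x)).toReal) := by
    ext x; rw [ofReal_toReal_meas]
  rw [this]
  exact ENNReal.measurable_ofReal.comp (measurable_meas_Iic F)


lemma prod_range_ite_pow (a u : ENNReal) (jv m : ℕ) (h : jv ≤ m) :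
    (∏ i ∈ Finset.range m, (if i < jv then a else u)) = a^jv * u^(m - jv) := by
  obtain ⟨d, rfl⟩ : ∃ d, m = jv + d := ⟨m - jv, by omega⟩
  rw [Finset.prod_range_add]
  congr 1
  · rw [Finset.prod_congr rfl (fun i hi => if_pos (Finset.mem_range.mp hi)), Finset.prod_const,
      Finset.card_range]
  · rw [Finset.prod_congr rfl (fun i _ => if_neg (by omega)), Finset.prod_const,
      Finset.card_range]
    congr 1; omega

lemma Dset_measure (m : ℕ) (F : Measure ℝ) [IsProbabilityMeasure F] (j : Fin (m+1)) :
    Measure.pi (fun _ : Fin (m+1) => F) (Dset m j)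
      = ∫⁻ x, (F (Set.Iio x))^(j:ℕ) * (F (Set.Iic x))^(m - (j:ℕ)) ∂F := by
  classical
  set e := MeasurableEquiv.piFinSuccAbove (fun _ : Fin (m+1) => ℝ) j
  have hmp := measurePreserving_piFinSuccAbove (fun _ : Fin (m+1) => F) j
  set s : Set (ℝ × (Fin m → ℝ)) :=
    {p | ∀ k, p.2 k ∈ (if (j.succAbove k) < j then Set.Iio p.1 else Set.Iic p.1)} with hs_def
  have hs_meas : MeasurableSet s := by
    have : s = ⋂ k, {p : ℝ × (Fin m → ℝ) |
        p.2 k ∈ (if (j.succAbove k) < j then Set.Iio p.1 else Set.Iic p.1)} := by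
      ext p; simp [hs_def, Set.mem_iInter]
    rw [this]
    refine MeasurableSet.iInter fun k => ?_
    by_cases h : (j.succAbove k) < j
    · simp only [h, if_true]
      exact measurableSet_lt ((measurable_pi_apply k).comp measurable_snd) measurable_fst
    · simp only [h, if_false]
      exact measurableSet_le ((measurable_pi_apply k).comp measurable_snd) measurable_fst
  have hpre : e ⁻¹' s = Dset m j := by
    ext w
    simp only [Set.mem_preimage, hs_def, Set.mem_setOf_eq, Dset]
    constructor
    · intro h i
      constructor
      · intro hij
        have hne : i ≠ j := ne_of_lt hij
        obtain ⟨k, hk⟩ := Fin.exists_succAbove_eq hne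
        have := h k
        rw [hk] at this
        simp only [hij, if_true] at this
        simpa [e, MeasurableEquiv.piFinSuccAbove, Fin.insertNthEquiv, Fin.removeNth, hk] using this
      · intro hji
        have hne : i ≠ j := ne_of_gt hji
        obtain ⟨k, hk⟩ := Fin.exists_succAbove_eq hne
        have := h k
        rw [hk] at this
        simp only [not_lt.2 (le_of_lt hji), if_false] at this
        simpa [e, MeasurableEquiv.piFinSuccAbove, Fin.insertNthEquiv, Fin.removeNth, hk] using this
    · intro h k
      have hne := j.succAbove_ne k
      by_cases hlt : (j.succAbove k) < j
      · simp only [hlt, if_true]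
        have := (h (j.succAbove k)).1 hlt
        simpa [e, MeasurableEquiv.piFinSuccAbove, Fin.insertNthEquiv, Fin.removeNth] using this
      · simp only [hlt, if_false]
        have hji : j < j.succAbove k := lt_of_le_of_ne (not_lt.1 hlt) (Ne.symm hne)
        have := (h (j.succAbove k)).2 hji
        simpa [e, MeasurableEquiv.piFinSuccAbove, Fin.insertNthEquiv, Fin.removeNth] using this
  have key : Measure.pi (fun _ : Fin (m+1) => F) (Dset m j)
      = (F.prod (Measure.pi fun _ : Fin m => F)) s := by
    rw [← hpre]
    exact (hmp.measure_preimage hs_meas.nullMeasurableSet)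
  rw [key, Measure.prod_apply hs_meas]
  congr 1
  ext x
  have hsec : Prod.mk x ⁻¹' s
      = Set.pi Set.univ (fun k => if (j.succAbove k) < j then Set.Iio x else Set.Iic x) := by
    ext y; simp [hs_def, Set.mem_pi]
  rw [hsec, Measure.pi_pi]
  have hcount : ∀ k : Fin m, ((j.succAbove k) < j ↔ (k : ℕ) < (j : ℕ)) := by
    intro k
    rw [Fin.succAbove_lt_iff_castSucc_lt]
    rfl
  calc ∏ k : Fin m, F (if (j.succAbove k) < j then Set.Iio x else Set.Iic x)
      = ∏ k : Fin m, F (if (k : ℕ) < (j : ℕ) then Set.Iio x else Set.Iic x) := by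
        apply Finset.prod_congr rfl
        intro k _
        rw [if_congr (hcount k) rfl rfl]
    _ = ∏ i ∈ Finset.range m, F (if i < (j : ℕ) then Set.Iio x else Set.Iic x) := by
        rw [Finset.prod_range fun i => F (if i < (j : ℕ) then Set.Iio x else Set.Iic x)]
    _ = (F (Set.Iio x))^(j:ℕ) * (F (Set.Iic x))^(m - (j:ℕ)) := by
        have hj : (j : ℕ) ≤ m := Nat.lt_succ_iff.mp j.isLt
        rw [Finset.prod_congr rfl (fun i _ => apply_ite F (i < (j:ℕ)) _ _)]
        exact prod_range_ite_pow _ _ _ _ hj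

lemma sum_lintegral_eq_one (m : ℕ) (F : Measure ℝ) [IsProbabilityMeasure F] :
    ∑ j : Fin (m+1), ∫⁻ x, (F (Set.Iio x))^(j:ℕ) * (F (Set.Iic x))^(m - (j:ℕ)) ∂F = 1 := by
  have h1 : ∑ j : Fin (m+1), Measure.pi (fun _ : Fin (m+1) => F) (Dset m j) = 1 := by
    rw [← tsum_fintype (L := SummationFilter.unconditional _), ← measure_iUnion (Dset_disjoint m) (fun j => Dset_measurable m j),
      Dset_cover]
    exact measure_univ
  rw [← h1]
  exact Finset.sum_congr rfl fun j _ => (Dset_measure m F j).symm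

lemma lintegral_term_ne_top (m : ℕ) (F : Measure ℝ) [IsProbabilityMeasure F] (j : Fin (m+1)) :
    ∫⁻ x, (F (Set.Iio x))^(j:ℕ) * (F (Set.Iic x))^(m - (j:ℕ)) ∂F ≠ ⊤ := by
  have := sum_lintegral_eq_one m F
  intro h
  have hle : (⊤ : ENNReal) ≤ ∑ j : Fin (m+1),
      ∫⁻ x, (F (Set.Iio x))^(j:ℕ) * (F (Set.Iic x))^(m - (j:ℕ)) ∂F := by
    rw [← h]
    exact Finset.single_le_sum (f := fun j : Fin (m+1) =>
      ∫⁻ x, (F (Set.Iio x))^(j:ℕ) * (F (Set.Iic x))^(m - (j:ℕ)) ∂F)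
      (fun _ _ => zero_le) (Finset.mem_univ j)
  rw [this] at hle
  exact absurd hle (by simp)

/-- Real version of the partition identity. -/
lemma sum_integral_eq_one (m : ℕ) (F : Measure ℝ) [IsProbabilityMeasure F] :
    ∑ j : Fin (m+1),
      ∫ x, (F (Set.Iio x)).toReal^(j:ℕ) * (F (Set.Iic x)).toReal^(m - (j:ℕ)) ∂F = 1 := by
  have heq : ∀ j : Fin (m+1),
      ∫ x, (F (Set.Iio x)).toReal^(j:ℕ) * (F (Set.Iic x)).toReal^(m - (j:ℕ)) ∂F
        = (∫⁻ x, (F (Set.Iio x))^(j:ℕ) * (F (Set.Iic x))^(m - (j:ℕ)) ∂F).toReal := by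
    intro j
    rw [← integral_toReal]
    · apply integral_congr_ae
      filter_upwards with x
      rw [ENNReal.toReal_mul, ENNReal.toReal_pow, ENNReal.toReal_pow]
    · exact ((aemeas_Iio F).pow_const _ |>.mul ((aemeas_Iic F).pow_const _)).aemeasurable
    · filter_upwards with x
      exact ENNReal.mul_lt_top (ENNReal.pow_lt_top (measure_lt_top F _))
        (ENNReal.pow_lt_top (measure_lt_top F _))
  calc ∑ j : Fin (m+1), ∫ x, (F (Set.Iio x)).toReal^(j:ℕ) * (F (Set.Iic x)).toReal^(m - (j:ℕ)) ∂F
      = ∑ j : Fin (m+1),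
          (∫⁻ x, (F (Set.Iio x))^(j:ℕ) * (F (Set.Iic x))^(m - (j:ℕ)) ∂F).toReal :=
        Finset.sum_congr rfl fun j _ => heq j
    _ = (∑ j : Fin (m+1), ∫⁻ x, (F (Set.Iio x))^(j:ℕ) * (F (Set.Iic x))^(m - (j:ℕ)) ∂F).toReal :=
        (ENNReal.toReal_sum fun j _ => lintegral_term_ne_top m F j).symm
    _ = 1 := by rw [sum_lintegral_eq_one]; rfl

lemma phi_algebra (m : ℕ) (a q : ℝ) (ha : 0 ≤ a) :
    ∑ i ∈ Finset.range (m+1), (m.choose i : ℝ) * a^i * q^(m-i) / ((i:ℝ)+1)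
      = (1/((m:ℝ)+1)) * ∑ j ∈ Finset.range (m+1), q^j * (q+a)^(m-j) := by
  have hm1 : ((m:ℝ)+1) ≠ 0 := by positivity
  rcases eq_or_lt_of_le ha with rfl | hpos
  · have hL : ∑ i ∈ Finset.range (m+1), (m.choose i : ℝ) * 0^i * q^(m-i) / ((i:ℝ)+1)
        = q^m := by
      rw [Finset.sum_eq_single 0]
      · simp
      · intro i _ hi; simp [zero_pow hi]
      · intro h; simp at h
    have hR : ∑ j ∈ Finset.range (m+1), q^j * (q+0)^(m-j) = ((m:ℝ)+1) * q^m := by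
      have hc : ∀ j ∈ Finset.range (m+1), q^j * (q+0)^(m-j) = q^m := by
        intro j hj
        rw [add_zero, ← pow_add,
          Nat.add_sub_cancel' (Nat.lt_succ_iff.mp (Finset.mem_range.mp hj))]
      rw [Finset.sum_congr rfl hc, Finset.sum_const, Finset.card_range, nsmul_eq_mul]
      push_cast; ring
    rw [hL, hR, one_div, inv_mul_cancel_left₀ hm1]
  · have ha0 : a ≠ 0 := ne_of_gt hpos
    have key : (((m:ℝ)+1) * a) * (∑ i ∈ Finset.range (m+1),
          (m.choose i : ℝ) * a^i * q^(m-i) / ((i:ℝ)+1))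
        = (((m:ℝ)+1) * a) * ((1/((m:ℝ)+1)) * ∑ j ∈ Finset.range (m+1), q^j * (q+a)^(m-j)) := by
      have lhs_eq : (((m:ℝ)+1) * a) * (∑ i ∈ Finset.range (m+1),
            (m.choose i : ℝ) * a^i * q^(m-i) / ((i:ℝ)+1))
          = ∑ i ∈ Finset.range (m+1), ((m+1).choose (i+1) : ℝ) * a^(i+1) * q^(m-i) := by
        rw [Finset.mul_sum]
        refine Finset.sum_congr rfl fun i _ => ?_
        have hi1 : ((i:ℝ)+1) ≠ 0 := by positivity
        have hch : ((m:ℝ)+1) * (m.choose i : ℝ) = ((m+1).choose (i+1) : ℝ) * ((i:ℝ)+1) := by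
          have h := Nat.add_one_mul_choose_eq m i
          exact_mod_cast congrArg (Nat.cast : ℕ → ℝ) h
        have hdiv : ((m:ℝ)+1) * (m.choose i : ℝ) / ((i:ℝ)+1) = ((m+1).choose (i+1) : ℝ) := by
          rw [div_eq_iff hi1]; exact hch
        calc (((m:ℝ)+1) * a) * ((m.choose i : ℝ) * a^i * q^(m-i) / ((i:ℝ)+1))
            = (((m:ℝ)+1) * (m.choose i : ℝ) / ((i:ℝ)+1)) * a^(i+1) * q^(m-i) := by ring
          _ = ((m+1).choose (i+1) : ℝ) * a^(i+1) * q^(m-i) := by rw [hdiv]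
      have hgeom : (∑ i ∈ Finset.range (m+1), (q+a)^i * q^(m-i)) * a
          = (q+a)^(m+1) - q^(m+1) := by
        have h := geom_sum₂_mul (q+a) q (m+1)
        simp only [Nat.add_sub_cancel, add_sub_cancel_left] at h
        simpa using h
      have hswap : ∑ j ∈ Finset.range (m+1), q^j * (q+a)^(m-j)
          = ∑ i ∈ Finset.range (m+1), (q+a)^i * q^(m-i) := by
        rw [← Finset.sum_range_reflect (fun i => (q+a)^i * q^(m-i)) (m+1)]
        refine Finset.sum_congr rfl fun j hj => ?_
        have hj' := Nat.lt_succ_iff.mp (Finset.mem_range.mp hj)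
        simp only [Nat.add_sub_cancel]
        rw [Nat.sub_sub_self hj', mul_comm]
      have rhs_eq : (((m:ℝ)+1) * a) * ((1/((m:ℝ)+1)) * ∑ j ∈ Finset.range (m+1),
            q^j * (q+a)^(m-j))
          = (q+a)^(m+1) - q^(m+1) := by
        rw [hswap, ← hgeom]; field_simp
      have binom : ∑ i ∈ Finset.range (m+1), ((m+1).choose (i+1) : ℝ) * a^(i+1) * q^(m-i)
          = (q+a)^(m+1) - q^(m+1) := by
        have hap := add_pow a q (m+1)
        have hsum : ∑ k ∈ Finset.range (m+2), a^k * q^(m+1-k) * ((m+1).choose k : ℝ)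
            = (∑ i ∈ Finset.range (m+1), a^(i+1) * q^(m+1-(i+1)) * ((m+1).choose (i+1) : ℝ))
              + a^0 * q^(m+1-0) * ((m+1).choose 0 : ℝ) := Finset.sum_range_succ' _ (m+1)
        rw [hsum] at hap
        have h2 : ∑ i ∈ Finset.range (m+1), a^(i+1) * q^(m+1-(i+1)) * ((m+1).choose (i+1) : ℝ)
            = (q+a)^(m+1) - q^(m+1) := by
          simp only [Nat.choose_zero_right, pow_zero, Nat.sub_zero, Nat.cast_one, one_mul,
            mul_one] at hap
          have hcomm : (a+q)^(m+1) = (q+a)^(m+1) := by ring_nf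
          rw [hcomm] at hap
          linarith [hap]
        rw [← h2]
        refine Finset.sum_congr rfl fun i _ => ?_
        have h3 : m + 1 - (i+1) = m - i := by omega
        rw [h3]; ring
      rw [lhs_eq, rhs_eq, binom]
    have hne : (((m:ℝ)+1) * a) ≠ 0 := mul_ne_zero hm1 ha0
    exact mul_left_cancel₀ hne key

noncomputable def phiFun (n : ℕ) (F : Measure ℝ) (x : ℝ) : ℝ :=
  ∑ i ∈ Finset.range n,
      ((n - 1).choose i : ℝ) * ((F {x}).toReal) ^ i * ((F (Set.Ico 0 x)).toReal) ^ (n - 1 - i)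
        / ((i : ℝ) + 1)

lemma winProb_eq (n : ℕ) (G F : Measure ℝ) : winProb n G F = ∫ x, phiFun n F x ∂G := rfl

lemma measurable_meas_Ico (F : Measure ℝ) [IsFiniteMeasure F] :
    Measurable fun x => (F (Set.Ico 0 x)).toReal := by
  apply Monotone.measurable
  intro x y hxy
  exact ENNReal.toReal_mono (measure_ne_top F _)
    (measure_mono (Set.Ico_subset_Ico le_rfl hxy))

lemma Iic_split (F : Measure ℝ) [IsFiniteMeasure F] (x : ℝ) :
    (F (Set.Iic x)).toReal = (F (Set.Iio x)).toReal + (F {x}).toReal := by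
  have h : Set.Iic x = Set.Iio x ∪ {x} := by
    ext y; simp [le_iff_lt_or_eq]
  rw [h, measure_union (by simp) (measurableSet_singleton x), ENNReal.toReal_add
    (measure_ne_top F _) (measure_ne_top F _)]

lemma measurable_meas_atom (F : Measure ℝ) [IsFiniteMeasure F] :
    Measurable fun x => (F {x}).toReal := by
  have h : (fun x => (F {x}).toReal)
      = fun x => (F (Set.Iic x)).toReal - (F (Set.Iio x)).toReal := by
    ext x; rw [Iic_split F x]; ring
  rw [h]
  exact (measurable_meas_Iic F).sub (measurable_meas_Iio F)

lemma toReal_meas_le_one (F : Measure ℝ) [IsProbabilityMeasure F] (s : Set ℝ) :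
    (F s).toReal ≤ 1 := by
  have := prob_le_one (μ := F) (s := s)
  calc (F s).toReal ≤ (1 : ENNReal).toReal := ENNReal.toReal_mono (by simp) this
    _ = 1 := by simp

lemma phi_measurable (n : ℕ) (F : Measure ℝ) [IsFiniteMeasure F] :
    Measurable (phiFun n F) := by
  apply Finset.measurable_sum
  intro i _
  exact ((measurable_const.mul ((measurable_meas_atom F).pow_const i)).mul
    ((measurable_meas_Ico F).pow_const _)).div_const _

lemma phi_nonneg (n : ℕ) (F : Measure ℝ) (x : ℝ) : 0 ≤ phiFun n F x := by
  apply Finset.sum_nonneg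
  intro i _
  positivity

lemma phi_le (n : ℕ) (F : Measure ℝ) [IsProbabilityMeasure F] (x : ℝ) :
    phiFun n F x ≤ ∑ i ∈ Finset.range n, ((n - 1).choose i : ℝ) := by
  apply Finset.sum_le_sum
  intro i _
  have h1 : ((F {x}).toReal) ^ i ≤ 1 :=
    pow_le_one₀ ENNReal.toReal_nonneg (toReal_meas_le_one F _)
  have h2 : ((F (Set.Ico 0 x)).toReal) ^ (n - 1 - i) ≤ 1 :=
    pow_le_one₀ ENNReal.toReal_nonneg (toReal_meas_le_one F _)
  have h3 : (1:ℝ) ≤ (i:ℝ) + 1 := by linarith [Nat.cast_nonneg (α := ℝ) i]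
  calc ((n - 1).choose i : ℝ) * ((F {x}).toReal) ^ i * ((F (Set.Ico 0 x)).toReal) ^ (n - 1 - i)
        / ((i : ℝ) + 1)
      ≤ ((n - 1).choose i : ℝ) * ((F {x}).toReal) ^ i * ((F (Set.Ico 0 x)).toReal) ^ (n - 1 - i)
        := div_le_self (by positivity) h3
    _ ≤ ((n - 1).choose i : ℝ) := by
        calc ((n - 1).choose i : ℝ) * ((F {x}).toReal) ^ i
              * ((F (Set.Ico 0 x)).toReal) ^ (n - 1 - i)
            ≤ ((n - 1).choose i : ℝ) * 1 * 1 := by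
              apply mul_le_mul ?_ h2 (by positivity) (by positivity)
              apply mul_le_mul le_rfl h1 (by positivity) (by positivity)
          _ = ((n - 1).choose i : ℝ) := by ring

lemma phi_integrable (n : ℕ) (F ν : Measure ℝ) [IsProbabilityMeasure F] [IsFiniteMeasure ν] :
    Integrable (phiFun n F) ν := by
  apply Integrable.mono' (integrable_const (∑ i ∈ Finset.range n, ((n - 1).choose i : ℝ)))
    (phi_measurable n F).aestronglyMeasurable
  filter_upwards with x
  rw [Real.norm_eq_abs, abs_of_nonneg (phi_nonneg n F x)]
  exact phi_le n F x

lemma Iio_eq_Ico (F : Measure ℝ) (hsupp : F (Set.Icc (0:ℝ) 1)ᶜ = 0) {x : ℝ} (hx : 0 ≤ x) :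
    F (Set.Iio x) = F (Set.Ico 0 x) := by
  apply le_antisymm
  · have hsub : Set.Iio x ⊆ Set.Iio 0 ∪ Set.Ico 0 x := by
      intro y hy
      rcases lt_or_ge y 0 with h | h
      · exact Or.inl h
      · exact Or.inr ⟨h, hy⟩
    calc F (Set.Iio x) ≤ F (Set.Iio 0 ∪ Set.Ico 0 x) := measure_mono hsub
      _ ≤ F (Set.Iio 0) + F (Set.Ico 0 x) := measure_union_le _ _
      _ ≤ F (Set.Icc (0:ℝ) 1)ᶜ + F (Set.Ico 0 x) := by
          gcongr
          intro y hy
          simp only [Set.mem_compl_iff, Set.mem_Icc, not_and_or, not_le]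
          exact Or.inl hy
      _ = F (Set.Ico 0 x) := by rw [hsupp, zero_add]
  · exact measure_mono (fun y hy => hy.2)

lemma winProb_self (m : ℕ) (F : Measure ℝ) [IsProbabilityMeasure F]
    (hsupp : F (Set.Icc (0:ℝ) 1)ᶜ = 0) :
    winProb (m+1) F F = 1 / ((m:ℝ)+1) := by
  have hae : ∀ᵐ x ∂F, x ∈ Set.Icc (0:ℝ) 1 := by
    rw [ae_iff]
    convert hsupp using 2
    rfl
  have hcongr : ∀ᵐ x ∂F, phiFun (m+1) F x
      = (1/((m:ℝ)+1)) * ∑ j ∈ Finset.range (m+1),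
          (F (Set.Iio x)).toReal^j * (F (Set.Iic x)).toReal^(m-j) := by
    filter_upwards [hae] with x hx
    have hx0 : (0:ℝ) ≤ x := hx.1
    have hIio : (F (Set.Iio x)).toReal = (F (Set.Ico 0 x)).toReal := by
      rw [Iio_eq_Ico F hsupp hx0]
    have hIic : (F (Set.Iic x)).toReal = (F (Set.Ico 0 x)).toReal + (F {x}).toReal := by
      rw [Iic_split F x, hIio]
    have := phi_algebra m ((F {x}).toReal) ((F (Set.Ico 0 x)).toReal) ENNReal.toReal_nonneg
    rw [phiFun]
    simp only [Nat.add_sub_cancel]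
    rw [this]
    congr 1
    refine Finset.sum_congr rfl fun j _ => ?_
    rw [hIio, hIic]
  rw [winProb_eq, integral_congr_ae hcongr, integral_const_mul, integral_finset_sum]
  · have : ∑ j ∈ Finset.range (m+1),
        ∫ x, (F (Set.Iio x)).toReal^j * (F (Set.Iic x)).toReal^(m-j) ∂F = 1 := by
      rw [← Fin.sum_univ_eq_sum_range
        (fun j => ∫ x, (F (Set.Iio x)).toReal^j * (F (Set.Iic x)).toReal^(m-j) ∂F) (m+1)]
      exact sum_integral_eq_one m F
    rw [this, mul_one]
  · intro j _
    apply Integrable.mono' (integrable_const (1:ℝ))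
      (((measurable_meas_Iio F).pow_const _ |>.mul
        ((measurable_meas_Iic F).pow_const _)).aestronglyMeasurable)
    filter_upwards with x
    simp only [Pi.mul_apply]
    rw [Real.norm_eq_abs, abs_of_nonneg (by positivity)]
    calc (F (Set.Iio x)).toReal^j * (F (Set.Iic x)).toReal^(m-j)
        ≤ 1 * 1 := by
          apply mul_le_mul (pow_le_one₀ ENNReal.toReal_nonneg (toReal_meas_le_one F _))
            (pow_le_one₀ ENNReal.toReal_nonneg (toReal_meas_le_one F _)) (by positivity)
            (by positivity)
      _ = 1 := by ring

lemma integrable_dirac'' (f : ℝ → ℝ) (a : ℝ) : Integrable f (Measure.dirac a) := by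
  refine (integrable_const (f a)).congr ?_
  rw [Filter.EventuallyEq, ae_dirac_eq]
  exact Filter.eventually_pure.2 rfl

lemma phi_gap (m : ℕ) (F : Measure ℝ) [IsProbabilityMeasure F] (b t : ℝ)
    (hb0 : 0 ≤ b) (hbt : b < t) :
    phiFun (m+1) F t - phiFun (m+1) F b
      ≥ (1 - 1/((m:ℝ)+1)) * ((F {b}).toReal)^m := by
  set am := (F {b}).toReal with ham_def
  set qb := (F (Set.Ico 0 b)).toReal with hqb_def
  set qt := (F (Set.Ico 0 t)).toReal with hqt_def
  have ham0 : 0 ≤ am := ENNReal.toReal_nonneg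
  have hqb0 : 0 ≤ qb := ENNReal.toReal_nonneg
  have hA : qb + am ≤ qt := by
    have hsub : Set.Ico 0 b ∪ {b} ⊆ Set.Ico 0 t := by
      intro y hy
      rcases hy with hy | hy
      · exact ⟨hy.1, hy.2.trans hbt⟩
      · rw [Set.mem_singleton_iff] at hy; exact ⟨hy ▸ hb0, hy ▸ hbt⟩
    have hdisj : Disjoint (Set.Ico (0:ℝ) b) {b} := by
      simp [Set.disjoint_singleton_right]
    have := measure_mono (μ := F) hsub
    rw [measure_union hdisj (measurableSet_singleton b)] at this
    calc qb + am = (F (Set.Ico 0 b) + F {b}).toReal := by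
          rw [ENNReal.toReal_add (measure_ne_top F _) (measure_ne_top F _)]
      _ ≤ qt := ENNReal.toReal_mono (measure_ne_top F _) this
  have hB : qt^m ≤ phiFun (m+1) F t := by
    have h0 : (0:ℕ) ∈ Finset.range (m+1) := by simp
    have := Finset.single_le_sum (f := fun i => ((m).choose i : ℝ)
        * ((F {t}).toReal)^i * ((F (Set.Ico 0 t)).toReal)^(m-i) / ((i:ℝ)+1))
      (fun i _ => by positivity) h0
    simp only [Nat.choose_zero_right, Nat.cast_one, pow_zero, Nat.sub_zero, Nat.cast_zero,
      zero_add, one_mul, mul_one, div_one] at this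
    calc qt^m = ((F (Set.Ico 0 t)).toReal)^m := rfl
      _ ≤ _ := by
          rw [phiFun]
          simp only [Nat.add_sub_cancel]
          exact this
  have hC : phiFun (m+1) F b ≤ (am + qb)^m - (1 - 1/((m:ℝ)+1)) * am^m := by
    have hexp : ∑ i ∈ Finset.range (m+1), (m.choose i : ℝ) * am^i * qb^(m-i)
        = (am + qb)^m := by
      rw [add_pow]
      exact Finset.sum_congr rfl fun i _ => by ring
    rw [phiFun]
    simp only [Nat.add_sub_cancel]
    rw [Finset.sum_range_succ]
    have h1 : ∑ i ∈ Finset.range m, (m.choose i : ℝ) * am^i * qb^(m-i) / ((i:ℝ)+1)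
        ≤ ∑ i ∈ Finset.range m, (m.choose i : ℝ) * am^i * qb^(m-i) := by
      apply Finset.sum_le_sum
      intro i _
      exact div_le_self (by positivity) (by linarith [Nat.cast_nonneg (α := ℝ) i])
    have h2 : ∑ i ∈ Finset.range m, (m.choose i : ℝ) * am^i * qb^(m-i)
        = (am + qb)^m - am^m := by
      have := Finset.sum_range_succ
        (fun i => (m.choose i : ℝ) * am^i * qb^(m-i)) m
      rw [hexp] at this
      simp only [Nat.choose_self, Nat.cast_one, Nat.sub_self, pow_zero, one_mul, mul_one] at this
      linarith [this]
    have h3 : (m.choose m : ℝ) * am^m * qb^(m-m) / ((m:ℝ)+1) = am^m / ((m:ℝ)+1) := by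
      simp
    rw [h3]
    have : am^m / ((m:ℝ)+1) = (1/((m:ℝ)+1)) * am^m := by ring
    rw [this]
    have hfin : (1 - 1/((m:ℝ)+1)) * am^m = am^m - (1/((m:ℝ)+1)) * am^m := by ring
    linarith [h1, h2]
  have hD : (am + qb)^m ≤ qt^m := by
    apply pow_le_pow_left₀ (by linarith) (by linarith [hA])
  linarith [hB, hC, hD]

/-- If `F ∈ M(μ)` has an atom at some `b ∈ [0,1)`, then `F` is not a symmetric
equilibrium of the frictionless game: some `G ∈ M(μ)` wins with probability `> 1/n`. -/
theorem stmt_8 (n : ℕ) (hn : 2 ≤ n) (μ : ℝ) (hμ : 0 < μ) (hμ1 : μ < 1)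
    (F : Measure ℝ) (hF : MemM μ F)
    (b : ℝ) (hb : b ∈ Set.Ico (0:ℝ) 1) (hatom : 0 < F {b}) :
    ∃ G : Measure ℝ, MemM μ G ∧ 1 / (n : ℝ) < winProb n G F := by
  obtain ⟨hFprob, hsupp, hmean⟩ := hF
  obtain ⟨m, rfl⟩ : ∃ m, n = m + 1 := ⟨n - 1, by omega⟩
  have hm1 : 1 ≤ m := by omega
  set nr : ℝ := (m:ℝ) + 1 with hnr_def
  have hnr1 : (1:ℝ) < nr := by
    have : (1:ℝ) ≤ (m:ℝ) := by exact_mod_cast hm1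
    simp only [hnr_def]; linarith
  have hnr0 : (0:ℝ) < nr := by linarith
  set am := (F {b}).toReal with ham_def
  have ham : 0 < am := ENNReal.toReal_pos (ne_of_gt hatom) (measure_ne_top F _)
  set δ := (1 - 1/nr) * am^m with hδ_def
  have hδ : 0 < δ := by
    apply mul_pos ?_ (pow_pos ham m)
    have : 1/nr < 1 := by
      rw [div_lt_one hnr0]; exact hnr1
    linarith
  set K := am * δ with hK_def
  have hK : 0 < K := mul_pos ham hδ
  set ε := min ((1-b)/2) (K*μ/(2*am*(1/nr + K))) with hε_def
  have hb0 : (0:ℝ) ≤ b := hb.1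
  have hb1 : b < 1 := hb.2
  have hden : 0 < 2*am*(1/nr + K) := by positivity
  have hε : 0 < ε := by
    apply lt_min (by linarith)
    positivity
  have hεb : b + ε ≤ 1 := by
    have := min_le_left ((1-b)/2) (K*μ/(2*am*(1/nr + K)))
    rw [← hε_def] at this
    linarith
  have hεK : ε * (am * (1/nr + K)) < K * μ := by
    have h1 : ε ≤ K*μ/(2*am*(1/nr + K)) := min_le_right _ _
    have h2 : K*μ/(2*am*(1/nr + K)) < K*μ/(am*(1/nr + K)) := by
      apply div_lt_div_of_pos_left (by positivity) (by positivity)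
      have : 0 < am*(1/nr+K) := by positivity
      linarith
    have h3 : ε < K*μ/(am*(1/nr + K)) := lt_of_le_of_lt h1 h2
    rw [lt_div_iff₀ (by positivity)] at h3
    linarith
  set t := b + ε with ht_def
  have ht0 : 0 ≤ t := by simp only [ht_def]; linarith
  have ht1 : t ≤ 1 := hεb
  have hbt : b < t := by simp only [ht_def]; linarith
  set θ := am*ε/(μ + am*ε) with hθ_def
  have hθden : 0 < μ + am*ε := by positivity
  have hθ0 : 0 ≤ θ := by positivity
  have hθ1 : θ < 1 := by
    rw [hθ_def, div_lt_one hθden]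
    linarith
  have h1θ : 1 - θ = μ / (μ + am*ε) := by
    rw [hθ_def, eq_div_iff (ne_of_gt hθden), sub_mul, div_mul_cancel₀ _ (ne_of_gt hθden)]; ring
  have h1θpos : 0 < 1 - θ := by rw [h1θ]; positivity
  set ν : Measure ℝ := F.restrict {b}ᶜ + (F {b}) • Measure.dirac t with hν_def
  set G : Measure ℝ := (ENNReal.ofReal (1-θ)) • ν + (ENNReal.ofReal θ) • Measure.dirac 0
    with hG_def
  -- total masses
  have hcompl : F {b}ᶜ = 1 - F {b} := by
    rw [measure_compl (measurableSet_singleton b) (measure_ne_top F _), measure_univ]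
  have hνuniv : ν Set.univ = 1 := by
    rw [hν_def, Measure.add_apply, Measure.restrict_apply MeasurableSet.univ,
      Set.univ_inter, Measure.smul_apply, Measure.dirac_apply_of_mem (Set.mem_univ t),
      smul_eq_mul, mul_one, hcompl]
    exact tsub_add_cancel_of_le prob_le_one
  have hGprob : IsProbabilityMeasure G := by
    constructor
    rw [hG_def, Measure.add_apply, Measure.smul_apply, Measure.smul_apply, hνuniv,
      Measure.dirac_apply_of_mem (Set.mem_univ (0:ℝ)), smul_eq_mul, mul_one, smul_eq_mul,
      mul_one, ← ENNReal.ofReal_add (by linarith) hθ0]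
    norm_num
  -- support
  have hsupp' : G (Set.Icc (0:ℝ) 1)ᶜ = 0 := by
    have hmeas : MeasurableSet (Set.Icc (0:ℝ) 1)ᶜ := measurableSet_Icc.compl
    have ht_mem : t ∈ Set.Icc (0:ℝ) 1 := ⟨ht0, ht1⟩
    have h0_mem : (0:ℝ) ∈ Set.Icc (0:ℝ) 1 := by simp
    rw [hG_def, Measure.add_apply, Measure.smul_apply, Measure.smul_apply, hν_def,
      Measure.add_apply, Measure.restrict_apply hmeas, Measure.smul_apply]
    have h1 : F ((Set.Icc (0:ℝ) 1)ᶜ ∩ {b}ᶜ) = 0 :=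
      measure_mono_null Set.inter_subset_left hsupp
    have h2 : Measure.dirac t (Set.Icc (0:ℝ) 1)ᶜ = 0 := by
      rw [Measure.dirac_apply' _ hmeas]
      simp [ht_mem]
    have h3 : Measure.dirac (0:ℝ) (Set.Icc (0:ℝ) 1)ᶜ = 0 := by
      rw [Measure.dirac_apply' _ hmeas]
      simp [h0_mem]
    rw [h1, h2, h3]
    simp
  -- integrability of identity
  have haeF : ∀ᵐ x ∂F, x ∈ Set.Icc (0:ℝ) 1 := by
    rw [ae_iff]; convert hsupp using 2; rfl
  have hid : Integrable (fun x => x) F := by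
    apply Integrable.mono' (integrable_const (1:ℝ)) measurable_id.aestronglyMeasurable
    filter_upwards [haeF] with x hx
    simp only [Real.norm_eq_abs, id_eq]
    rw [abs_of_nonneg hx.1]; exact hx.2
  -- mean of G
  have hrs : ∫ x in {b}, x ∂F = am * b := by
    rw [Measure.restrict_singleton, integral_smul_measure, integral_dirac, smul_eq_mul]
  have hrestrict_mean : ∫ x in {b}ᶜ, x ∂F = μ - am * b := by
    have := integral_add_compl (measurableSet_singleton b) hid
    rw [hrs, hmean] at this
    linarith
  have hν_int_id : Integrable (fun x => x) ν := by
    rw [hν_def]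
    exact (hid.restrict).add_measure
      ((integrable_dirac'' (fun x => x) t).smul_measure (measure_ne_top F _))
  have hmeanν : ∫ x, x ∂ν = (μ - am * b) + am * t := by
    rw [hν_def, integral_add_measure hid.restrict
      ((integrable_dirac'' (fun x => x) t).smul_measure (measure_ne_top F _)),
      integral_smul_measure, integral_dirac, hrestrict_mean, ham_def, smul_eq_mul]
  have hGmean : ∫ x, x ∂G = μ := by
    rw [hG_def, integral_add_measure (hν_int_id.smul_measure ENNReal.ofReal_ne_top)
      ((integrable_dirac'' (fun x => x) 0).smul_measure ENNReal.ofReal_ne_top),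
      integral_smul_measure, integral_smul_measure, integral_dirac, hmeanν,
      ENNReal.toReal_ofReal (by linarith), ENNReal.toReal_ofReal hθ0]
    simp only [smul_eq_mul, mul_zero, add_zero, ht_def]
    rw [h1θ]
    have hexp : μ - am * b + am * (b + ε) = μ + am * ε := by ring
    rw [hexp, div_mul_cancel₀ _ (ne_of_gt hθden)]
  -- win probability of G
  have hφint : Integrable (phiFun (m+1) F) F := phi_integrable (m+1) F F
  have hφF : ∫ x, phiFun (m+1) F x ∂F = 1/nr := by
    rw [← winProb_eq]; exact winProb_self m F hsupp
  have hφb : ∫ x in {b}, phiFun (m+1) F x ∂F = am * phiFun (m+1) F b := by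
    rw [Measure.restrict_singleton, integral_smul_measure, integral_dirac, smul_eq_mul]
  have hφrestrict : ∫ x in {b}ᶜ, phiFun (m+1) F x ∂F = 1/nr - am * phiFun (m+1) F b := by
    have := integral_add_compl (measurableSet_singleton b) hφint
    rw [hφb, hφF] at this
    linarith
  have hφν : ∫ x, phiFun (m+1) F x ∂ν
      = (1/nr - am * phiFun (m+1) F b) + am * phiFun (m+1) F t := by
    rw [hν_def, integral_add_measure hφint.restrict
      ((integrable_dirac'' _ t).smul_measure (measure_ne_top F _)),
      integral_smul_measure, integral_dirac, hφrestrict, ham_def, smul_eq_mul]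
  have hφν_int : Integrable (phiFun (m+1) F) ν :=
    (hφint.restrict).add_measure ((integrable_dirac'' _ t).smul_measure (measure_ne_top F _))
  have hwin : winProb (m+1) G F
      = (1-θ) * ((1/nr - am * phiFun (m+1) F b) + am * phiFun (m+1) F t)
        + θ * phiFun (m+1) F 0 := by
    rw [winProb_eq, hG_def, integral_add_measure (hφν_int.smul_measure ENNReal.ofReal_ne_top)
      ((integrable_dirac'' _ 0).smul_measure ENNReal.ofReal_ne_top),
      integral_smul_measure, integral_smul_measure, integral_dirac, hφν,
      ENNReal.toReal_ofReal (by linarith : (0:ℝ) ≤ 1-θ), ENNReal.toReal_ofReal hθ0,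
      smul_eq_mul, smul_eq_mul]
  -- the gap
  have hgap := phi_gap m F b t hb0 hbt
  rw [← ham_def, ← hnr_def, ← hδ_def] at hgap
  -- final estimate
  have hstep1 : (1-θ) * (1/nr + K) ≤ winProb (m+1) G F := by
    rw [hwin]
    have h1 : θ * phiFun (m+1) F 0 ≥ 0 := mul_nonneg hθ0 (phi_nonneg _ _ _)
    have h2 : (1/nr - am * phiFun (m+1) F b) + am * phiFun (m+1) F t ≥ 1/nr + K := by
      rw [hK_def]
      have h3 : am * δ ≤ am * (phiFun (m+1) F t - phiFun (m+1) F b) :=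
        mul_le_mul_of_nonneg_left hgap (le_of_lt ham)
      have h4 : am * (phiFun (m+1) F t - phiFun (m+1) F b)
          = am * phiFun (m+1) F t - am * phiFun (m+1) F b := by ring
      linarith
    have h5 := mul_le_mul_of_nonneg_left h2 (le_of_lt h1θpos)
    linarith
  have hstep2 : 1/nr < (1-θ) * (1/nr + K) := by
    have hθle : θ ≤ am*ε/μ := by
      rw [hθ_def]
      apply div_le_div_of_nonneg_left (by positivity) hμ (by linarith [mul_pos ham hε])
    have hkey : θ * (1/nr + K) < K := by
      calc θ * (1/nr + K) ≤ (am*ε/μ) * (1/nr + K) := by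
            apply mul_le_mul_of_nonneg_right hθle (by positivity)
        _ < K := by
            rw [div_mul_eq_mul_div, div_lt_iff₀ hμ]
            have : am * ε * (1/nr + K) = ε * (am * (1/nr + K)) := by ring
            linarith
    have hexpand : (1-θ)*(1/nr+K) = (1/nr + K) - θ*(1/nr+K) := by ring
    linarith
  have hfinal : 1/nr < winProb (m+1) G F := lt_of_lt_of_le hstep2 hstep1
  refine ⟨G, ⟨hGprob, hsupp', hGmean⟩, ?_⟩
  have : ((m:ℕ)+1 : ℝ) = nr := by push_cast [hnr_def]; ring
  rw [show (((m+1):ℕ) : ℝ) = nr by push_cast [hnr_def]; ring]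
  exact hfinal
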